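/- For every z ∈ ℂ with z ≠ 0, there is no w ∈ ℂ with 0 < |w| < 1 such that both z·c(w) and z·c(−iw) are purely imaginary (i.e. have zero real part), where c(u) = (u + u⁻¹)/2. -/

import Mathlib

/-- For `z ≠ 0` there is no `w` in the punctured open unit disc such that both
`z·c(w)` and `z·c(-iw)` are purely imaginary, where `c(u) = (u + u⁻¹)/2`. -/
theorem stmt_6 (z : ℂ) (hz : z ≠ 0) :
    ¬∃ w : ℂ, (0 < ‖w‖ ∧ ‖w‖ < 1) ∧
      (z * ((w + w⁻¹) / 2)).re = 0 ∧
      (z * ((-Complex.I * w + (-Complex.I * w)⁻¹) / 2)).re = 0 := by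
  rintro ⟨w, ⟨hw0, hw1⟩, h1, h2⟩
  have hw : w ≠ 0 := by
    intro h; simp [h] at hw0
  set a := z * (w + w⁻¹) with ha
  set b := z * (w - w⁻¹) with hb
  have ha0 : a.re = 0 := by
    have e : z * ((w + w⁻¹) / 2) = a / 2 := by rw [ha]; ring
    rw [e] at h1
    have : (a / 2).re = a.re / 2 := by
      simp [Complex.div_re, Complex.normSq]
    rw [this] at h1
    linarith
  have hb0 : b.im = 0 := by
    have hinv : (-Complex.I * w)⁻¹ = Complex.I * w⁻¹ := by
      rw [mul_inv, inv_neg, Complex.inv_I, neg_neg]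
    have e : z * ((-Complex.I * w + (-Complex.I * w)⁻¹) / 2) = -Complex.I * b / 2 := by
      rw [hinv, hb]; ring
    rw [e] at h2
    have : (-Complex.I * b / 2).re = b.im / 2 := by
      simp [Complex.div_re, Complex.mul_re, Complex.normSq]
    rw [this] at h2
    linarith
  have key : Complex.normSq (a + b) = Complex.normSq (a - b) := by
    simp only [Complex.normSq_apply, Complex.add_re, Complex.add_im,
      Complex.sub_re, Complex.sub_im, ha0, hb0]
    ring
  have e1 : a + b = 2 * z * w := by rw [ha, hb]; ring
  have e2 : a - b = 2 * z * w⁻¹ := by rw [ha, hb]; ring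
  rw [e1, e2, mul_assoc, mul_assoc, map_mul, map_mul, map_mul, map_mul,
    map_inv₀] at key
  have hz' : 0 < Complex.normSq z := Complex.normSq_pos.mpr hz
  have hwn : 0 < Complex.normSq w := Complex.normSq_pos.mpr hw
  have h2' : 0 < Complex.normSq (2 : ℂ) := by norm_num
  field_simp at key
  have hsq : Complex.normSq w * Complex.normSq w = 1 := by nlinarith [key]
  have hlt : Complex.normSq w < 1 := by
    have := Complex.sq_norm w
    nlinarith [hw1, hw0]
  nlinarith [hsq, hlt, hwn]
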